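/- arXiv:2007.15618 — 6 statements merged into one kernel-verified Lean document; each statement's English description precedes it below -/
import Mathlib

section
/- Let 0 ≤ ε ≤ δ, ε ≤ 1/2, and let S ⊂ ℝ^d be a finite set satisfying for all unit vectors v: (1) ‖μ_S − μ‖ ≤ δ, (2) v^T Σ̄_S v ≤ 1 + δ²/ε, and (3) for all subsets S' ⊆ S with |S'| ≥ (1−ε)|S|, v^T Σ̄_{S'} v ≥ 1 − δ²/ε. Then S is (ε, 7δ)-stable with respect to μ and σ² = 1. -/
open Finset

noncomputable def sampleMean {d n : ℕ} (x : Fin n → EuclideanSpace ℝ (Fin d))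
    (S : Finset (Fin n)) : EuclideanSpace ℝ (Fin d) :=
  (S.card : ℝ)⁻¹ • ∑ i ∈ S, x i

/-- `v ↦ vᵀ Σ̄_S v`, the quadratic form of the second moment matrix of `S` centered at `μ`. -/
noncomputable def qForm {d n : ℕ} (x : Fin n → EuclideanSpace ℝ (Fin d))
    (S : Finset (Fin n)) (μ v : EuclideanSpace ℝ (Fin d)) : ℝ :=
  (S.card : ℝ)⁻¹ * ∑ i ∈ S, (inner ℝ v (x i - μ) : ℝ) ^ 2

/-- `S` is `(ε, δ)`-stable with respect to `μ` and `σ²`: for every `S' ⊆ S` with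
`|S'| ≥ (1-ε)|S|`, the mean of `S'` is `σδ`-close to `μ` and the centered second moment
matrix is within `σ²δ²/ε` of `σ² I` in spectral norm (expressed via quadratic forms). -/
def IsStable {d n : ℕ} (x : Fin n → EuclideanSpace ℝ (Fin d)) (S : Finset (Fin n))
    (μ : EuclideanSpace ℝ (Fin d)) (σ ε δ : ℝ) : Prop :=
  ∀ S' ⊆ S, (1 - ε) * (S.card : ℝ) ≤ (S'.card : ℝ) →
    ‖sampleMean x S' - μ‖ ≤ σ * δ ∧
    ∀ v : EuclideanSpace ℝ (Fin d), ‖v‖ = 1 →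
      |qForm x S' μ v - σ ^ 2| ≤ σ ^ 2 * δ ^ 2 / ε

lemma card_mul_qForm {d n : ℕ} (x : Fin n → EuclideanSpace ℝ (Fin d))
    (T : Finset (Fin n)) (μ v : EuclideanSpace ℝ (Fin d)) :
    (T.card : ℝ) * qForm x T μ v = ∑ i ∈ T, (inner ℝ v (x i - μ) : ℝ) ^ 2 := by
  rcases T.eq_empty_or_nonempty with h | h
  · simp [h, qForm]
  · have hc : (T.card : ℝ) ≠ 0 := by exact_mod_cast Finset.card_ne_zero_of_mem h.choose_spec
    unfold qForm
    rw [← mul_assoc, mul_inv_cancel₀ hc, one_mul]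

lemma inner_sampleMean {d n : ℕ} (x : Fin n → EuclideanSpace ℝ (Fin d))
    (T : Finset (Fin n)) (μ v : EuclideanSpace ℝ (Fin d)) (hT : T.Nonempty) :
    (inner ℝ v (sampleMean x T - μ) : ℝ)
      = (T.card : ℝ)⁻¹ * ∑ i ∈ T, (inner ℝ v (x i - μ) : ℝ) := by
  have hc : (T.card : ℝ) ≠ 0 := by exact_mod_cast Finset.card_ne_zero_of_mem hT.choose_spec
  unfold sampleMean
  rw [inner_sub_right, inner_smul_right, inner_sum]
  simp only [inner_sub_right, Finset.sum_sub_distrib, Finset.sum_const, nsmul_eq_mul]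
  field_simp

set_option maxHeartbeats 1600000 in
theorem stmt2 {d n : ℕ} (x : Fin n → EuclideanSpace ℝ (Fin d)) (S : Finset (Fin n))
    (μ : EuclideanSpace ℝ (Fin d)) (ε δ : ℝ)
    (hε0 : 0 ≤ ε) (hεδ : ε ≤ δ) (hε : ε ≤ 1/2)
    (hmean : ‖sampleMean x S - μ‖ ≤ δ)
    (hub : ∀ v : EuclideanSpace ℝ (Fin d), ‖v‖ = 1 → qForm x S μ v ≤ 1 + δ ^ 2 / ε)
    (hlb : ∀ S' ⊆ S, (1 - ε) * (S.card : ℝ) ≤ (S'.card : ℝ) →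
      ∀ v : EuclideanSpace ℝ (Fin d), ‖v‖ = 1 → 1 - δ ^ 2 / ε ≤ qForm x S' μ v) :
    IsStable x S μ 1 ε (7 * δ) := by
  have hδ0 : 0 ≤ δ := le_trans hε0 hεδ
  intro S' hsub hcard
  rcases S'.eq_empty_or_nonempty with hS' | hS'
  · -- S' empty forces S empty
    have hS : S = ∅ := by
      rw [← Finset.card_eq_zero]
      by_contra h
      have h1 : (1:ℝ) ≤ (S.card : ℝ) := by exact_mod_cast Nat.one_le_iff_ne_zero.mpr h
      rw [hS'] at hcard
      simp at hcard
      nlinarith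
    subst hS
    have hS'2 : S' = ∅ := hS'
    subst hS'2
    constructor
    · simpa using hmean.trans (by nlinarith)
    · intro v hv
      have h1 := hlb ∅ (Finset.Subset.refl _) (by simp) v hv
      have h2 : qForm x (∅ : Finset (Fin n)) μ v = 0 := by simp [qForm]
      rw [h2] at h1 ⊢
      have ht : (1:ℝ) ≤ δ ^ 2 / ε := by linarith
      have : (1:ℝ)^2 * (7*δ)^2 / ε = 49 * (δ^2/ε) := by ring
      rw [this, abs_of_nonpos (by norm_num)]
      linarith
  · -- S' nonempty
    have hm0 : 0 < (S'.card : ℝ) := by exact_mod_cast Finset.card_pos.mpr hS'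
    have hmN : (S'.card : ℝ) ≤ (S.card : ℝ) := by exact_mod_cast Finset.card_le_card hsub
    have hN0 : 0 < (S.card : ℝ) := lt_of_lt_of_le hm0 hmN
    rcases eq_or_lt_of_le hε0 with hεz | hεpos
    · -- ε = 0 : S' = S
      have hεz : ε = 0 := hεz.symm
      subst hεz
      have hSS : S' = S := Finset.eq_of_subset_of_card_le hsub (by exact_mod_cast (by linarith [hcard] : (S.card:ℝ) ≤ (S'.card:ℝ)))
      subst hSS
      constructor
      · simpa using hmean.trans (by nlinarith)
      · intro v hv
        have h1 := hub v hv
        have h2 := hlb S' (Finset.Subset.refl _) (by linarith) v hv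
        simp only [div_zero] at h1 h2 ⊢
        rw [abs_le]
        constructor <;> nlinarith
    · -- main case ε > 0
      set N : ℝ := (S.card : ℝ) with hN
      set m : ℝ := (S'.card : ℝ) with hm
      have ht0 : 0 ≤ δ ^ 2 / ε := div_nonneg (sq_nonneg _) hε0
      have htε : ε ≤ δ ^ 2 / ε := by
        rw [le_div_iff₀ hεpos]; nlinarith
      have hN2m : N ≤ 2 * m := by nlinarith
      -- upper/lower sums for arbitrary unit v
      have key : ∀ v : EuclideanSpace ℝ (Fin d), ‖v‖ = 1 →
          (∑ i ∈ S, (inner ℝ v (x i - μ) : ℝ) ^ 2 ≤ N * (1 + δ ^ 2 / ε)) ∧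
          (m * (1 - δ ^ 2 / ε) ≤ ∑ i ∈ S', (inner ℝ v (x i - μ) : ℝ) ^ 2) := by
        intro v hv
        constructor
        · have := mul_le_mul_of_nonneg_left (hub v hv) (le_of_lt hN0)
          rw [card_mul_qForm] at this
          linarith
        · have := mul_le_mul_of_nonneg_left (hlb S' hsub hcard v hv) (le_of_lt hm0)
          rw [card_mul_qForm] at this
          linarith
      constructor
      · -- mean bound
        rcases eq_or_ne (sampleMean x S' - μ) 0 with hw | hw
        · rw [hw]; simp; nlinarith
        · set w := sampleMean x S' - μ with hwdef
          have hwn : 0 < ‖w‖ := norm_pos_iff.mpr hw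
          set v : EuclideanSpace ℝ (Fin d) := ‖w‖⁻¹ • w with hvdef
          have hv : ‖v‖ = 1 := by
            rw [hvdef, norm_smul, norm_inv, norm_norm, inv_mul_cancel₀ (ne_of_gt hwn)]
          have hinner : (inner ℝ v w : ℝ) = ‖w‖ := by
            rw [hvdef, real_inner_smul_left, real_inner_self_eq_norm_sq]
            field_simp
          have hfin : ‖w‖ = m⁻¹ * ∑ i ∈ S', (inner ℝ v (x i - μ) : ℝ) := by
            rw [← hinner, hwdef]
            exact inner_sampleMean x S' μ v hS'
          clear_value w v
          obtain ⟨hubv, hlbv⟩ := key v hv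
          -- sums
          have hsplit : ∑ i ∈ S, (inner ℝ v (x i - μ) : ℝ)
              = ∑ i ∈ S', (inner ℝ v (x i - μ) : ℝ) + ∑ i ∈ S \ S', (inner ℝ v (x i - μ) : ℝ) := by
            rw [← Finset.sum_union (Finset.disjoint_sdiff), Finset.union_sdiff_of_subset hsub]
          have hsplit2 : ∑ i ∈ S, (inner ℝ v (x i - μ) : ℝ) ^ 2
              = ∑ i ∈ S', (inner ℝ v (x i - μ) : ℝ) ^ 2 + ∑ i ∈ S \ S', (inner ℝ v (x i - μ) : ℝ) ^ 2 := by
            rw [← Finset.sum_union (Finset.disjoint_sdiff), Finset.union_sdiff_of_subset hsub]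
          have hcardT : ((S \ S').card : ℝ) = N - m := by
            rw [Finset.card_sdiff_of_subset hsub]
            push_cast [Finset.card_le_card hsub]
            ring
          have hcardT' : N - m ≤ ε * N := by nlinarith
          -- |sum over S|
          have hSsum : |∑ i ∈ S, (inner ℝ v (x i - μ) : ℝ)| ≤ N * δ := by
            have he : ∑ i ∈ S, (inner ℝ v (x i - μ) : ℝ) = N * (inner ℝ v (sampleMean x S - μ) : ℝ) := by
              rw [inner_sampleMean x S μ v (hS'.mono hsub), ← mul_assoc,
                mul_inv_cancel₀ (ne_of_gt hN0), one_mul]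
            rw [he, abs_mul, abs_of_pos hN0]
            have := abs_real_inner_le_norm v (sampleMean x S - μ)
            rw [hv, one_mul] at this
            exact mul_le_mul_of_nonneg_left (this.trans hmean) (le_of_lt hN0)
          -- sum of squares over T
          have hTsq : ∑ i ∈ S \ S', (inner ℝ v (x i - μ) : ℝ) ^ 2 ≤ N * (1 + δ^2/ε) - m * (1 - δ^2/ε) := by
            rw [hsplit2] at hubv
            linarith
          have hCS : (∑ i ∈ S \ S', (inner ℝ v (x i - μ) : ℝ)) ^ 2
              ≤ ((S \ S').card : ℝ) * ∑ i ∈ S \ S', (inner ℝ v (x i - μ) : ℝ) ^ 2 := by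
            exact_mod_cast sq_sum_le_card_mul_sum_sq (s := S \ S') (f := fun i => (inner ℝ v (x i - μ) : ℝ))
          have hεt : ε * (δ^2/ε) = δ^2 := by field_simp
          have hTbound : |∑ i ∈ S \ S', (inner ℝ v (x i - μ) : ℝ)| ≤ 2 * N * δ := by
            have hsq : (∑ i ∈ S \ S', (inner ℝ v (x i - μ) : ℝ)) ^ 2 ≤ (2 * N * δ)^2 := by
              calc (∑ i ∈ S \ S', (inner ℝ v (x i - μ) : ℝ)) ^ 2
                  ≤ ((S \ S').card : ℝ) * ∑ i ∈ S \ S', (inner ℝ v (x i - μ) : ℝ) ^ 2 := hCS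
                _ ≤ (ε * N) * (N * (1 + δ^2/ε) - m * (1 - δ^2/ε)) := by
                    apply mul_le_mul (by rw [hcardT]; exact hcardT') hTsq
                      (Finset.sum_nonneg fun i _ => sq_nonneg _)
                      (mul_nonneg hε0 hN0.le)
                _ ≤ (ε * N) * (N * (ε + 2 * (δ^2/ε))) := by
                    apply mul_le_mul_of_nonneg_left _ (mul_nonneg hε0 hN0.le)
                    nlinarith [mul_le_mul_of_nonneg_right hmN ht0]
                _ ≤ (2 * N * δ)^2 := by
                    have he : (ε * N) * (N * (ε + 2 * (δ^2/ε)))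
                        = N^2 * (ε*ε) + 2 * N^2 * (ε * (δ^2/ε)) := by ring
                    rw [he, hεt]
                    nlinarith [mul_self_le_mul_self hε0 hεδ, sq_nonneg N,
                      mul_le_mul_of_nonneg_left (mul_self_le_mul_self hε0 hεδ) (sq_nonneg N)]
            exact abs_le_of_sq_le_sq hsq (mul_nonneg (mul_nonneg zero_le_two hN0.le) hδ0)
          -- finish
          have hS'sum : ∑ i ∈ S', (inner ℝ v (x i - μ) : ℝ) ≤ 3 * N * δ := by
            have h1 := abs_le.mp hSsum
            have h2 := abs_le.mp hTbound
            linarith [hsplit]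
          rw [one_mul, hfin, inv_mul_le_iff₀ hm0]
          nlinarith [mul_le_mul_of_nonneg_right hN2m hδ0, mul_nonneg hm0.le hδ0]
      · -- variance bound
        intro v hv
        obtain ⟨hubv, hlbv⟩ := key v hv
        have hS'sub : ∑ i ∈ S', (inner ℝ v (x i - μ) : ℝ) ^ 2 ≤ ∑ i ∈ S, (inner ℝ v (x i - μ) : ℝ) ^ 2 :=
          Finset.sum_le_sum_of_subset_of_nonneg hsub (fun i _ _ => sq_nonneg _)
        have hq : m * qForm x S' μ v = ∑ i ∈ S', (inner ℝ v (x i - μ) : ℝ) ^ 2 :=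
          card_mul_qForm x S' μ v
        have hq2 := hlb S' hsub hcard v hv
        have hgoal : (1:ℝ)^2 * (7*δ)^2 / ε = 49 * (δ^2/ε) := by ring
        rw [hgoal, abs_le]
        constructor
        · linarith
        · have hup : m * qForm x S' μ v ≤ N * (1 + δ^2/ε) := by
            rw [hq]; linarith
          have hmul : m * qForm x S' μ v ≤ m * (1 + 49 * (δ^2/ε)) := by
            nlinarith [mul_le_mul_of_nonneg_right htε hN0.le,
              mul_le_mul_of_nonneg_right hN2m ht0, mul_nonneg hm0.le ht0]
          linarith [le_of_mul_le_mul_left hmul hm0]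
end

section
/- Let X be a random vector in ℝ^d with mean 0 such that for all unit vectors v, (E|v^T X|^k)^{1/k} ≤ σ_k for some k ≥ 4. Then for every PSD matrix M with tr(M) = 1, E[(X^T M X)^{k/2}] ≤ σ_k^k. -/
open MeasureTheory Matrix

private lemma quadform_decomp' {d : ℕ} {M : Matrix (Fin d) (Fin d) ℝ} (hA : M.IsHermitian)
    (x : Fin d → ℝ) :
    x ⬝ᵥ M.mulVec x = ∑ i, hA.eigenvalues i * (∑ j, hA.eigenvectorBasis i j * x j) ^ 2 := by
  conv_lhs => rw [hA.spectral_theorem]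
  set U := (hA.eigenvectorUnitary : Matrix (Fin d) (Fin d) ℝ)
  rw [Unitary.conjStarAlgAut_apply, ← mulVec_mulVec, ← mulVec_mulVec, dotProduct_mulVec]
  have hv : vecMul x U = fun i => ∑ j, hA.eigenvectorBasis i j * x j := by
    funext i; simp [vecMul, dotProduct, U, mul_comm]
  have hsv : (star U) *ᵥ x = fun i => ∑ j, hA.eigenvectorBasis i j * x j := by
    funext i; simp [mulVec, dotProduct, U, star, conjTranspose]
  rw [hv, hsv]
  simp only [dotProduct, mulVec_diagonal, Function.comp_apply, RCLike.ofReal_real_eq_id, id_eq]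
  exact Finset.sum_congr rfl fun i _ => by ring

theorem stmt6 {d : ℕ} {Ω : Type*} [MeasurableSpace Ω] (μ : Measure Ω)
    [IsProbabilityMeasure μ] (X : Ω → (Fin d → ℝ)) (hXm : Measurable X)
    (k : ℕ) (hk : 4 ≤ k) (σk : ℝ) (hσ : 0 ≤ σk)
    (hmean : ∀ i, ∫ ω, X ω i ∂μ = 0)
    (hintk : ∀ v : Fin d → ℝ, Integrable (fun ω => |∑ i, v i * X ω i| ^ k) μ)
    (hmom : ∀ v : Fin d → ℝ, (∑ i, v i ^ 2) = 1 →
      (∫ ω, |∑ i, v i * X ω i| ^ k ∂μ) ^ ((k : ℝ)⁻¹) ≤ σk)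
    (M : Matrix (Fin d) (Fin d) ℝ) (hM : M.PosSemidef) (htr : M.trace = 1) :
    ∫ ω, (X ω ⬝ᵥ M.mulVec (X ω)) ^ ((k : ℝ) / 2) ∂μ ≤ σk ^ k := by
  have hH := hM.1
  set lam := hH.eigenvalues with hlam
  set v : Fin d → Fin d → ℝ := fun i j => hH.eigenvectorBasis i j with hvdef
  have hk0 : (k : ℝ) ≠ 0 := by positivity
  have hlam_nonneg : ∀ i, 0 ≤ lam i := fun i => hM.eigenvalues_nonneg i
  -- sum of eigenvalues = 1
  have hsum : ∑ i, lam i = 1 := by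
    have := htr
    conv_lhs at this => rw [hH.spectral_theorem]
    rw [Unitary.conjStarAlgAut_apply, trace_mul_cycle, (Matrix.mem_unitaryGroup_iff'.mp
      hH.eigenvectorUnitary.2), Matrix.one_mul, trace_diagonal] at this
    simpa using this
  -- eigenvectors are unit vectors
  have hunit : ∀ i, ∑ j, v i j ^ 2 = 1 := by
    intro i
    have hn : ‖hH.eigenvectorBasis i‖ = 1 := hH.eigenvectorBasis.orthonormal.1 i
    rw [EuclideanSpace.norm_eq] at hn
    have := Real.sqrt_eq_one.mp hn
    simpa [sq_abs] using this
  -- pointwise bound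
  have hpt : ∀ ω, (X ω ⬝ᵥ M.mulVec (X ω)) ^ ((k : ℝ) / 2) ≤
      ∑ i, lam i * |∑ j, v i j * X ω j| ^ k := by
    intro ω
    rw [quadform_decomp' hH]
    have hp : (1 : ℝ) ≤ (k : ℝ) / 2 := by
      rw [le_div_iff₀ (by norm_num)]
      exact_mod_cast le_trans (by norm_num) (Nat.cast_le.mpr hk)
    have := Real.rpow_arith_mean_le_arith_mean_rpow Finset.univ lam
      (fun i => (∑ j, v i j * X ω j) ^ 2) (fun i _ => hlam_nonneg i) hsum
      (fun i _ => sq_nonneg _) hp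
    refine le_trans this (le_of_eq (Finset.sum_congr rfl fun i _ => ?_))
    congr 1
    beta_reduce
    rw [← sq_abs, ← Real.rpow_natCast |∑ j, v i j * X ω j| 2,
      ← Real.rpow_natCast |∑ j, v i j * X ω j| k, ← Real.rpow_mul (abs_nonneg _)]
    congr 1
    push_cast
    ring
  -- integrability of RHS
  have hint : Integrable (fun ω => ∑ i, lam i * |∑ j, v i j * X ω j| ^ k) μ :=
    integrable_finset_sum _ fun i _ => ((hintk (v i)).const_mul (lam i))
  have h1 : ∫ ω, (X ω ⬝ᵥ M.mulVec (X ω)) ^ ((k : ℝ) / 2) ∂μ ≤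
      ∫ ω, ∑ i, lam i * |∑ j, v i j * X ω j| ^ k ∂μ := by
    refine integral_mono_of_nonneg (Filter.Eventually.of_forall fun ω => ?_) hint
      (Filter.Eventually.of_forall hpt)
    have : 0 ≤ X ω ⬝ᵥ M.mulVec (X ω) := by
      rw [quadform_decomp' hH]
      exact Finset.sum_nonneg fun i _ => mul_nonneg (hlam_nonneg i) (sq_nonneg _)
    exact Real.rpow_nonneg this _
  rw [integral_finset_sum _ (fun i _ => ((hintk (v i)).const_mul (lam i)))] at h1
  refine le_trans h1 ?_
  have hbound : ∀ i, ∫ ω, |∑ j, v i j * X ω j| ^ k ∂μ ≤ σk ^ k := by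
    intro i
    have hpos : 0 ≤ ∫ ω, |∑ j, v i j * X ω j| ^ k ∂μ :=
      integral_nonneg fun ω => by positivity
    have h := hmom (v i) (hunit i)
    calc ∫ ω, |∑ j, v i j * X ω j| ^ k ∂μ
        = ((∫ ω, |∑ j, v i j * X ω j| ^ k ∂μ) ^ ((k : ℝ)⁻¹)) ^ k := by
          rw [← Real.rpow_natCast (_ ^ ((k : ℝ)⁻¹)) k, ← Real.rpow_mul hpos,
            inv_mul_cancel₀ hk0, Real.rpow_one]
      _ ≤ σk ^ k := pow_le_pow_left₀ (Real.rpow_nonneg hpos _) h k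
  calc ∑ i, ∫ ω, lam i * |∑ j, v i j * X ω j| ^ k ∂μ
      = ∑ i, lam i * ∫ ω, |∑ j, v i j * X ω j| ^ k ∂μ := by
        refine Finset.sum_congr rfl fun i _ => ?_
        rw [integral_const_mul]
    _ ≤ ∑ i, lam i * σk ^ k := Finset.sum_le_sum fun i _ =>
        mul_le_mul_of_nonneg_left (hbound i) (hlam_nonneg i)
    _ = σk ^ k := by rw [← Finset.sum_mul, hsum, one_mul]
end

section
/- Let X be a random vector in ℝ^d with mean 0, covariance satisfying (1 − σ_k² ε^{1−2/k}) I ⪯ Σ ⪯ I, and (E|v^TX|^k)^{1/k} ≤ σ_k for all unit vectors v, k ≥ 4. Let f(x) = min(x, t) for t ≥ C T_k² where T_k = σ_k ε^{−1/k}. Then for every PSD matrix M with tr(M) = 1, |E[f(X^T M X)] − 1| ≤ σ_k² ε^{1−2/k} (1 + C^{1 − k/2}). -/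
open MeasureTheory Matrix

lemma decompM {d : ℕ} (M : Matrix (Fin d) (Fin d) ℝ) (hM : M.PosSemidef) :
    ∃ (lam : Fin d → ℝ) (u : Fin d → Fin d → ℝ),
      (∀ i, 0 ≤ lam i) ∧ (∑ i, lam i = M.trace) ∧ (∀ i, ∑ j, u i j ^ 2 = 1) ∧
      (∀ x : Fin d → ℝ, x ⬝ᵥ M.mulVec x = ∑ i, lam i * (∑ j, u i j * x j) ^ 2) := by
  classical
  have hH := hM.1
  set U : Matrix (Fin d) (Fin d) ℝ := (hH.eigenvectorUnitary : Matrix (Fin d) (Fin d) ℝ) with hU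
  refine ⟨hH.eigenvalues, fun i j => U j i, hM.eigenvalues_nonneg, ?_, ?_, ?_⟩
  · have h := hH.spectral_theorem
    have : M.trace = (U * diagonal (RCLike.ofReal ∘ hH.eigenvalues) * star U).trace := by
      exact congrArg Matrix.trace h
    rw [this, Matrix.trace_mul_cycle]
    have hUU : star U * U = 1 := Unitary.coe_star_mul_self hH.eigenvectorUnitary
    rw [hUU, Matrix.one_mul, Matrix.trace_diagonal]
    simp
  · intro i
    have hUU : star U * U = 1 := Unitary.coe_star_mul_self hH.eigenvectorUnitary
    have := congrFun (congrFun hUU i) i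
    simp only [Matrix.mul_apply, Matrix.one_apply_eq] at this
    rw [← this]
    congr 1; ext j
    simp [Matrix.star_apply, pow_two, mul_comm]
  · intro x
    conv_lhs => rw [hH.spectral_theorem, Unitary.conjStarAlgAut_apply, ← hU]
    have hs : star U = Uᵀ := by
      ext i j; simp [Matrix.star_apply]
    rw [← Matrix.mulVec_mulVec, ← Matrix.mulVec_mulVec, Matrix.dotProduct_mulVec,
      ← Matrix.mulVec_transpose, ← hs]
    simp only [Matrix.mulVec_diagonal, dotProduct]
    congr 1; ext i
    have : (star U).mulVec x i = ∑ j, U j i * x j := by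
      simp [Matrix.mulVec, dotProduct, Matrix.star_apply]
    rw [this]; simp only [Function.comp_apply, RCLike.ofReal_real_eq_id, id_eq]; ring

lemma Ehelp {σ ε C : ℝ} (hσ : 0 < σ) (hε : 0 < ε) (hC : 0 < C) {k : ℝ} (hk : k ≠ 0) :
    σ ^ 2 * ε ^ (1 - 2 / k) * C ^ (1 - k / 2) * (C * (σ * ε ^ (-k⁻¹)) ^ 2) ^ (k / 2 - 1)
      = σ ^ k := by
  have h1 : (0:ℝ) < σ * ε ^ (-k⁻¹) := by positivity
  have hL : 0 < σ ^ 2 * ε ^ (1 - 2 / k) * C ^ (1 - k / 2) *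
      (C * (σ * ε ^ (-k⁻¹)) ^ 2) ^ (k / 2 - 1) := by positivity
  apply Real.log_injOn_pos (Set.mem_Ioi.2 hL) (Set.mem_Ioi.2 (Real.rpow_pos_of_pos hσ k))
  rw [Real.log_rpow hσ, Real.log_mul (by positivity) (by positivity),
    Real.log_mul (by positivity) (by positivity),
    Real.log_mul (by positivity) (by positivity), Real.log_pow,
    Real.log_rpow hε, Real.log_rpow hC, Real.log_rpow (by positivity),
    Real.log_mul hC.ne' (by positivity), Real.log_pow,
    Real.log_mul hσ.ne' (by positivity), Real.log_rpow hε]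
  push_cast
  field_simp
  ring

theorem stmt8 {d : ℕ} {Ω : Type*} [MeasurableSpace Ω] (μ : Measure Ω)
    [IsProbabilityMeasure μ] (X : Ω → (Fin d → ℝ)) (hXm : Measurable X)
    (k : ℕ) (hk : 4 ≤ k) (σk ε C t : ℝ) (hσ : 0 ≤ σk)
    (hε0 : 0 < ε) (hε1 : ε < 1) (hC : 0 < C)
    (ht : C * (σk * ε ^ (-(k : ℝ)⁻¹)) ^ 2 ≤ t)
    (hmean : ∀ i, ∫ ω, X ω i ∂μ = 0)
    (hL2 : Integrable (fun ω => ∑ i, X ω i ^ 2) μ)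
    (hcovUB : ∀ v : Fin d → ℝ, (∑ i, v i ^ 2) = 1 →
      ∫ ω, (∑ i, v i * X ω i) ^ 2 ∂μ ≤ 1)
    (hcovLB : ∀ v : Fin d → ℝ, (∑ i, v i ^ 2) = 1 →
      1 - σk ^ 2 * ε ^ (1 - 2 / (k : ℝ)) ≤ ∫ ω, (∑ i, v i * X ω i) ^ 2 ∂μ)
    (hintk : ∀ v : Fin d → ℝ, Integrable (fun ω => |∑ i, v i * X ω i| ^ k) μ)
    (hmom : ∀ v : Fin d → ℝ, (∑ i, v i ^ 2) = 1 →
      (∫ ω, |∑ i, v i * X ω i| ^ k ∂μ) ^ ((k : ℝ)⁻¹) ≤ σk)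
    (M : Matrix (Fin d) (Fin d) ℝ) (hM : M.PosSemidef) (htr : M.trace = 1) :
    |(∫ ω, min (X ω ⬝ᵥ M.mulVec (X ω)) t ∂μ) - 1| ≤
      σk ^ 2 * ε ^ (1 - 2 / (k : ℝ)) * (1 + C ^ (1 - (k : ℝ) / 2)) := by
  classical
  obtain ⟨lam, u, hlam0, hlam1, hunit, hquad⟩ := decompM M hM
  rw [htr] at hlam1
  have hkR : (4:ℝ) ≤ (k:ℝ) := by exact_mod_cast hk
  have hkne : (k:ℝ) ≠ 0 := by linarith
  set δ : ℝ := σk ^ 2 * ε ^ (1 - 2 / (k:ℝ)) with hδdef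
  set m : ℝ := (k:ℝ) / 2 with hmdef
  have hm2 : (2:ℝ) ≤ m := by rw [hmdef]; linarith
  set Y : Fin d → Ω → ℝ := fun i ω => ∑ j, u i j * X ω j with hYdef
  have hYm : ∀ i, Measurable (Y i) := by
    intro i
    exact Finset.measurable_sum _ fun j _ =>
      (measurable_const.mul ((measurable_pi_apply j).comp hXm))
  -- d ≥ 1
  have hd : 0 < d := by
    rcases Nat.eq_zero_or_pos d with h | h
    · subst h; simp [Matrix.trace] at htr
    · exact h
  -- σk > 0
  have hσpos : 0 < σk := by
    rcases hσ.lt_or_eq with h | h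
    · exact h
    · exfalso
      set v := u ⟨0, hd⟩ with hv
      have hu1 := hunit ⟨0, hd⟩
      have h1 := hcovLB v hu1
      have h2 := hmom v hu1
      rw [← h] at h2
      have hδ0 : δ = 0 := by rw [hδdef, ← h]; norm_num
      rw [hδ0] at h1
      have hnn : (0:ℝ) ≤ ∫ ω, |∑ j, v j * X ω j| ^ k ∂μ :=
        integral_nonneg fun ω => by positivity
      have hz : ∫ ω, |∑ j, v j * X ω j| ^ k ∂μ = 0 := by
        rcases hnn.lt_or_eq with h3 | h3
        · exact absurd h2 (not_le.2 (Real.rpow_pos_of_pos h3 _))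
        · exact h3.symm
      have hae := (integral_eq_zero_iff_of_nonneg (fun ω => by positivity) (hintk v)).1 hz
      have hae2 : (fun ω => (∑ j, v j * X ω j) ^ 2) =ᵐ[μ] 0 := by
        filter_upwards [hae] with ω hω
        simp only [Pi.zero_apply] at hω ⊢
        have : |∑ j, v j * X ω j| = 0 := by
          have := pow_eq_zero_iff (n := k) (by omega) |>.1 hω
          exact this
        nlinarith [abs_nonneg (∑ j, v j * X ω j), sq_abs (∑ j, v j * X ω j)]
      rw [integral_congr_ae hae2] at h1
      simp at h1
      linarith
  -- t > 0
  have ht0 : 0 < t := lt_of_lt_of_le (by positivity) ht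
  -- integrability of Y i ^ 2
  have hYsq : ∀ i, Integrable (fun ω => Y i ω ^ 2) μ := by
    intro i
    refine hL2.mono' ((hYm i).pow_const 2).aestronglyMeasurable ?_
    filter_upwards with ω
    have hcs := Finset.sum_mul_sq_le_sq_mul_sq Finset.univ (u i) (X ω)
    rw [hunit i, one_mul] at hcs
    rw [Real.norm_eq_abs, abs_pow, sq_abs]
    exact hcs
  -- Q
  set Q : Ω → ℝ := fun ω => X ω ⬝ᵥ M.mulVec (X ω) with hQdef
  have hQeq : ∀ ω, Q ω = ∑ i, lam i * Y i ω ^ 2 := fun ω => hquad (X ω)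
  have hQfun : Q = fun ω => ∑ i, lam i * Y i ω ^ 2 := funext hQeq
  have hQ0 : ∀ ω, 0 ≤ Q ω := by
    intro ω; rw [hQeq ω]
    exact Finset.sum_nonneg fun i _ => mul_nonneg (hlam0 i) (sq_nonneg _)
  have hQint : Integrable Q μ := by
    rw [hQfun]
    exact integrable_finset_sum _ fun i _ => (hYsq i).const_mul _
  have hQI : ∫ ω, Q ω ∂μ = ∑ i, lam i * ∫ ω, Y i ω ^ 2 ∂μ := by
    rw [hQfun, integral_finset_sum _ fun i _ => (hYsq i).const_mul _]
    exact Finset.sum_congr rfl fun i _ => integral_const_mul _ _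
  have hQub : ∫ ω, Q ω ∂μ ≤ 1 := by
    rw [hQI, ← hlam1]
    refine Finset.sum_le_sum fun i _ => ?_
    calc lam i * ∫ ω, Y i ω ^ 2 ∂μ ≤ lam i * 1 :=
          mul_le_mul_of_nonneg_left (hcovUB (u i) (hunit i)) (hlam0 i)
      _ = lam i := mul_one _
  have hQlb : 1 - δ ≤ ∫ ω, Q ω ∂μ := by
    rw [hQI]
    calc 1 - δ = ∑ i, lam i * (1 - δ) := by rw [← Finset.sum_mul, hlam1, one_mul]
      _ ≤ ∑ i, lam i * ∫ ω, Y i ω ^ 2 ∂μ :=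
          Finset.sum_le_sum fun i _ =>
            mul_le_mul_of_nonneg_left (hcovLB (u i) (hunit i)) (hlam0 i)
  -- min integrable
  have hQm : Measurable Q := by
    rw [hQfun]
    exact Finset.measurable_sum _ fun i _ => ((hYm i).pow_const 2).const_mul _
  have hgint : Integrable (fun ω => min (Q ω) t) μ := by
    refine (hQint.add (integrable_const |t|)).mono'
      ((hQm.min measurable_const).aestronglyMeasurable) ?_
    filter_upwards with ω
    rw [Real.norm_eq_abs]
    rcases le_total (Q ω) t with h | h
    · rw [min_eq_left h, abs_of_nonneg (hQ0 ω)]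
      exact le_add_of_nonneg_right (abs_nonneg t)
    · rw [min_eq_right h]
      calc |t| ≤ 0 + |t| := by simp
        _ ≤ Q ω + |t| := by linarith [hQ0 ω]
  -- moment bounds
  have hmomk : ∀ i, ∫ ω, |Y i ω| ^ k ∂μ ≤ σk ^ k := by
    intro i
    have h2 := hmom (u i) (hunit i)
    have hnn : 0 ≤ ∫ ω, |∑ j, u i j * X ω j| ^ k ∂μ :=
      integral_nonneg fun ω => by positivity
    calc ∫ ω, |Y i ω| ^ k ∂μ
        = ((∫ ω, |∑ j, u i j * X ω j| ^ k ∂μ) ^ ((k:ℝ)⁻¹)) ^ (k:ℕ) := by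
          rw [← Real.rpow_natCast ((∫ ω, |∑ j, u i j * X ω j| ^ k ∂μ) ^ ((k:ℝ)⁻¹)) k,
            ← Real.rpow_mul hnn, inv_mul_cancel₀ hkne, Real.rpow_one]
      _ ≤ σk ^ k := pow_le_pow_left₀ (Real.rpow_nonneg hnn _) h2 k
  have htm : (0:ℝ) < t ^ (m - 1) := Real.rpow_pos_of_pos ht0 _
  -- pointwise excess bound
  have hexc : ∀ ω, Q ω - min (Q ω) t ≤ (∑ i, lam i * |Y i ω| ^ k) / t ^ (m - 1) := by
    intro ω
    have hQm' : Q ω ^ m ≤ ∑ i, lam i * |Y i ω| ^ k := by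
      have hj := Real.rpow_arith_mean_le_arith_mean_rpow Finset.univ lam
        (fun i => Y i ω ^ 2) (fun i _ => hlam0 i) hlam1 (fun i _ => sq_nonneg _)
        (le_trans one_le_two hm2)
      rw [← hQeq ω] at hj
      refine hj.trans (le_of_eq (Finset.sum_congr rfl fun i _ => ?_))
      congr 1
      show (Y i ω ^ 2) ^ m = |Y i ω| ^ k
      have hsq : Y i ω ^ 2 = |Y i ω| ^ 2 := (sq_abs _).symm
      rw [hsq, ← Real.rpow_natCast (|Y i ω|) 2, ← Real.rpow_mul (abs_nonneg _),
        ← Real.rpow_natCast (|Y i ω|) k]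
      congr 1
      rw [hmdef]; push_cast; ring
    have key : Q ω - min (Q ω) t ≤ Q ω ^ m / t ^ (m - 1) := by
      rcases le_total (Q ω) t with h | h
      · rw [min_eq_left h, sub_self]
        exact div_nonneg (Real.rpow_nonneg (hQ0 ω) _) htm.le
      · rw [min_eq_right h]
        have hQpos : 0 < Q ω := lt_of_lt_of_le ht0 h
        have h1 : t ^ (m - 1) ≤ Q ω ^ (m - 1) := Real.rpow_le_rpow ht0.le h (by linarith)
        have h2 : Q ω = Q ω ^ m / Q ω ^ (m - 1) := by
          rw [← Real.rpow_sub hQpos]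
          norm_num
        calc Q ω - t ≤ Q ω := by linarith
          _ = Q ω ^ m / Q ω ^ (m - 1) := h2
          _ ≤ Q ω ^ m / t ^ (m - 1) := by
              apply div_le_div_of_nonneg_left (Real.rpow_nonneg (hQ0 ω) _) htm h1
    refine key.trans ?_
    gcongr
  have hbint : Integrable (fun ω => (∑ i, lam i * |Y i ω| ^ k) / t ^ (m - 1)) μ :=
    (integrable_finset_sum _ fun i _ => ((hintk (u i)).const_mul _)).div_const _
  have hIexc : ∫ ω, (Q ω - min (Q ω) t) ∂μ ≤ σk ^ k / t ^ (m - 1) := by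
    refine (integral_mono (hQint.sub hgint) hbint fun ω => hexc ω).trans ?_
    rw [integral_div]
    gcongr
    rw [integral_finset_sum _ fun i _ => ((hintk (u i)).const_mul _)]
    calc ∑ i, ∫ ω, lam i * |Y i ω| ^ k ∂μ
        = ∑ i, lam i * ∫ ω, |Y i ω| ^ k ∂μ := by
          exact Finset.sum_congr rfl fun i _ => integral_const_mul _ _
      _ ≤ ∑ i, lam i * σk ^ k :=
          Finset.sum_le_sum fun i _ => mul_le_mul_of_nonneg_left (hmomk i) (hlam0 i)
      _ = σk ^ k := by rw [← Finset.sum_mul, hlam1, one_mul]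
  -- arithmetic
  set t₀ : ℝ := C * (σk * ε ^ (-(k:ℝ)⁻¹)) ^ 2 with ht₀def
  have ht₀pos : 0 < t₀ := by rw [ht₀def]; positivity
  have hE : δ * C ^ (1 - m) * t₀ ^ (m - 1) = σk ^ k := by
    rw [hδdef, ht₀def, hmdef, ← Real.rpow_natCast σk k]
    exact Ehelp hσpos hε0 hC hkne
  have hfin : σk ^ k / t ^ (m - 1) ≤ δ * C ^ (1 - m) := by
    rw [div_le_iff₀ htm]
    calc (σk:ℝ) ^ k = δ * C ^ (1 - m) * t₀ ^ (m - 1) := hE.symm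
      _ ≤ δ * C ^ (1 - m) * t ^ (m - 1) := by
          apply mul_le_mul_of_nonneg_left
            (Real.rpow_le_rpow ht₀pos.le ht (by linarith))
          rw [hδdef]; positivity
  -- conclude
  have hImin_le : ∫ ω, min (Q ω) t ∂μ ≤ ∫ ω, Q ω ∂μ :=
    integral_mono hgint hQint fun ω => min_le_left _ _
  have hsub : ∫ ω, (Q ω - min (Q ω) t) ∂μ
      = (∫ ω, Q ω ∂μ) - ∫ ω, min (Q ω) t ∂μ := integral_sub hQint hgint
  have hδnn : 0 ≤ δ := by rw [hδdef]; positivity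
  have hCp : 0 < C ^ (1 - m) := Real.rpow_pos_of_pos hC _
  have hexp : δ * (1 + C ^ (1 - m)) = δ + δ * C ^ (1 - m) := by ring
  have hkey : (∫ ω, Q ω ∂μ) - ∫ ω, min (Q ω) t ∂μ ≤ δ * C ^ (1 - m) := by
    rw [← hsub]; exact hIexc.trans hfin
  have hprod : 0 ≤ δ * (1 + C ^ (1 - m)) := mul_nonneg hδnn (by linarith)
  rw [abs_le]
  refine ⟨by linarith [hexp], by linarith [hexp]⟩
end

section
/- Let X be a random vector in ℝ^d with mean μ, covariance I, and (E|v^T(X−μ)|^k)^{1/k} ≤ σ_k for all unit vectors v, k > 2. Let ε ≤ 1/2 and E = {‖X − μ‖ ≤ T} with P(E) ≥ 1 − ε. Let Z be X conditioned on E. Then ‖μ − E[Z]‖ ≤ σ_k ε^{1−1/k}/(1−ε) ≤ 2 σ_k ε^{1−1/k}. -/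
open MeasureTheory ProbabilityTheory

lemma holder_aux {Ω : Type*} [MeasurableSpace Ω] (μ : Measure Ω) [IsProbabilityMeasure μ]
    (g : Ω → ℝ) (k : ℕ) (hk : 2 < k) (σk ε : ℝ) (hσ : 0 ≤ σk) (hε0 : 0 < ε)
    (hgint : Integrable (fun ω => |g ω| ^ k) μ) (hgm : AEStronglyMeasurable g μ)
    (hmomg : (∫ ω, |g ω| ^ k ∂μ) ^ ((k : ℝ)⁻¹) ≤ σk)
    (s : Set Ω) (hs : MeasurableSet s) (hsε : (μ s).toReal ≤ ε) :
    ∫ ω in s, g ω ∂μ ≤ σk * ε ^ (1 - (k : ℝ)⁻¹) := by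
  have hk1 : (1 : ℝ) < (k : ℝ) := by exact_mod_cast hk.trans' one_lt_two
  have hk0 : (0 : ℝ) < (k : ℝ) := lt_trans one_pos hk1
  set q : ℝ := (k : ℝ) / ((k : ℝ) - 1) with hq
  have hpq : Real.HolderConjugate (k : ℝ) q := Real.HolderConjugate.conjExponent hk1
  -- Memℒp of g w.r.t. μ
  have hmem : MemLp g ((k : ℕ) : ENNReal) μ := by
    have hne0 : ((k : ℕ) : ENNReal) ≠ 0 := by
      simpa using (by omega : k ≠ 0)
    have hnetop : ((k : ℕ) : ENNReal) ≠ ⊤ := ENNReal.natCast_ne_top k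
    rw [← memLp_norm_rpow_iff hgm hne0 hnetop]
    rw [ENNReal.div_self hne0 hnetop]
    rw [memLp_one_iff_integrable]
    have : (fun x => ‖g x‖ ^ (((k : ℕ) : ENNReal)).toReal) = fun x => |g x| ^ k := by
      funext x
      rw [Real.norm_eq_abs]
      norm_cast
    rw [this]; exact hgint
  have hmemabs : MemLp (fun ω => |g ω|) ((k : ℕ) : ENNReal) μ := by
    simpa [Real.norm_eq_abs] using hmem.norm
  -- Hölder on μ.restrict s with f = |g|, g = 1
  set ν := μ.restrict s with hν
  have hH := integral_mul_le_Lp_mul_Lq_of_nonneg (μ := ν) hpq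
    (f := fun ω => |g ω|) (g := fun _ => (1 : ℝ))
    (Filter.Eventually.of_forall fun x => abs_nonneg _)
    (Filter.Eventually.of_forall fun x => one_pos.le)
    (by simpa [ENNReal.ofReal_natCast] using hmemabs.restrict s)
    (memLp_const 1)
  simp only [mul_one, Real.one_rpow] at hH
  have hν1 : ∫ _ω, (1:ℝ) ∂ν = (μ s).toReal := by
    simp [hν, measureReal_def]
  rw [hν1] at hH
  -- |g|^(k:ℝ) = |g|^k
  have hgk : (∫ a, |g a| ^ (k:ℝ) ∂ν) = ∫ ω in s, |g ω| ^ k ∂μ := by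
    congr 1; funext x; rw [Real.rpow_natCast]
  rw [hgk] at hH
  have habs : ∫ ω in s, g ω ∂μ ≤ ∫ ω in s, |g ω| ∂μ := by
    calc ∫ ω in s, g ω ∂μ ≤ |∫ ω in s, g ω ∂μ| := le_abs_self _
    _ ≤ ∫ ω in s, |g ω| ∂μ := by
      simpa [Real.norm_eq_abs] using norm_integral_le_integral_norm (μ := μ.restrict s) g
  refine habs.trans (hH.trans ?_)
  have h1 : (∫ ω in s, |g ω| ^ k ∂μ) ^ (1 / (k:ℝ)) ≤ σk := by
    refine le_trans ?_ (by simpa [one_div] using hmomg)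
    rw [one_div]
    refine Real.rpow_le_rpow (integral_nonneg fun x => by positivity) ?_ (by positivity)
    exact setIntegral_le_integral hgint (Filter.Eventually.of_forall fun x => by positivity)
  have h2 : (μ s).toReal ^ (1 / q) ≤ ε ^ (1 - (k:ℝ)⁻¹) := by
    have hqq : 1 / q = 1 - (k:ℝ)⁻¹ := by
      rw [hq]; field_simp
    rw [hqq]
    have hexp : 0 ≤ 1 - (k:ℝ)⁻¹ := by
      have : (k:ℝ)⁻¹ ≤ 1 := by rw [inv_le_one_iff₀]; right; exact hk1.le
      linarith
    exact Real.rpow_le_rpow ENNReal.toReal_nonneg hsε hexp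
  have hnn1 : 0 ≤ (∫ ω in s, |g ω| ^ k ∂μ) ^ (1 / (k:ℝ)) :=
    Real.rpow_nonneg (integral_nonneg fun x => by positivity) _
  exact mul_le_mul h1 h2 (Real.rpow_nonneg ENNReal.toReal_nonneg _) hσ


theorem stmt10 {d : ℕ} {Ω : Type*} [MeasurableSpace Ω] (μ : Measure Ω)
    [IsProbabilityMeasure μ] (X : Ω → EuclideanSpace ℝ (Fin d)) (hXm : Measurable X)
    (m : EuclideanSpace ℝ (Fin d)) (k : ℕ) (hk : 2 < k) (σk ε T : ℝ)
    (hσ : 0 ≤ σk) (hε0 : 0 < ε) (hε : ε ≤ 1/2)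
    (hXint : Integrable X μ) (hmean : ∫ ω, X ω ∂μ = m)
    (hcov : ∀ v : EuclideanSpace ℝ (Fin d), ‖v‖ = 1 →
      ∫ ω, (inner ℝ v (X ω - m) : ℝ) ^ 2 ∂μ = 1)
    (hintk : ∀ v : EuclideanSpace ℝ (Fin d),
      Integrable (fun ω => |(inner ℝ v (X ω - m) : ℝ)| ^ k) μ)
    (hmom : ∀ v : EuclideanSpace ℝ (Fin d), ‖v‖ = 1 →
      (∫ ω, |(inner ℝ v (X ω - m) : ℝ)| ^ k ∂μ) ^ ((k : ℝ)⁻¹) ≤ σk)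
    (hE : ENNReal.ofReal (1 - ε) ≤ μ {ω | ‖X ω - m‖ ≤ T}) :
    ‖m - ∫ ω, X ω ∂(ProbabilityTheory.cond μ {ω | ‖X ω - m‖ ≤ T})‖ ≤
      σk * ε ^ (1 - (k : ℝ)⁻¹) / (1 - ε) ∧
    σk * ε ^ (1 - (k : ℝ)⁻¹) / (1 - ε) ≤ 2 * σk * ε ^ (1 - (k : ℝ)⁻¹) := by
  have hε1 : (0:ℝ) < 1 - ε := by linarith
  have hεpow : (0:ℝ) ≤ ε ^ (1 - (k : ℝ)⁻¹) := Real.rpow_nonneg hε0.le _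
  set E : Set Ω := {ω | ‖X ω - m‖ ≤ T} with hEdef
  have hEmeas : MeasurableSet E := by
    have : Measurable fun ω => ‖X ω - m‖ := (hXm.sub measurable_const).norm
    exact measurableSet_le this measurable_const
  -- measure facts
  have hμE1 : μ E ≤ 1 := prob_le_one
  have hcompl : μ Eᶜ ≤ ENNReal.ofReal ε := by
    have h1 : μ Eᶜ = 1 - μ E := prob_compl_eq_one_sub hEmeas
    rw [h1]
    calc (1:ENNReal) - μ E ≤ 1 - ENNReal.ofReal (1 - ε) := tsub_le_tsub_left hE 1
    _ = ENNReal.ofReal ε := by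
        rw [← ENNReal.ofReal_one, ← ENNReal.ofReal_sub _ (by linarith : (0:ℝ) ≤ 1 - ε)]
        norm_num
  have hcomplR : (μ Eᶜ).toReal ≤ ε := ENNReal.toReal_le_of_le_ofReal hε0.le hcompl
  have haR : 1 - ε ≤ (μ E).toReal := by
    exact (ENNReal.ofReal_le_iff_le_toReal (measure_ne_top μ E)).mp hE
  have ha0 : (0:ℝ) < (μ E).toReal := lt_of_lt_of_le hε1 haR
  set a : ℝ := (μ E).toReal with hadef
  have hcomplval : (μ Eᶜ).toReal = 1 - a := by
    rw [prob_compl_eq_one_sub hEmeas, ENNReal.toReal_sub_of_le hμE1 ENNReal.one_ne_top]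
    simp [hadef]
  -- conditional expectation
  have hcondint : ∫ ω, X ω ∂(ProbabilityTheory.cond μ E) = a⁻¹ • ∫ ω in E, X ω ∂μ := by
    rw [ProbabilityTheory.cond, integral_smul_measure, ENNReal.toReal_inv]
  have hsplit : (∫ ω in E, X ω ∂μ) + ∫ ω in Eᶜ, X ω ∂μ = m := by
    rw [integral_add_compl hEmeas hXint, hmean]
  -- the key vector J
  set J : EuclideanSpace ℝ (Fin d) := ∫ ω in Eᶜ, (X ω - m) ∂μ with hJdef
  have hXmint : Integrable (fun ω => X ω - m) μ := hXint.sub (integrable_const m)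
  have hJeq : J = (∫ ω in Eᶜ, X ω ∂μ) - (1 - a) • m := by
    rw [hJdef, integral_sub (hXint.restrict) ((integrable_const m).restrict),
      setIntegral_const, measureReal_def, hcomplval]
  have hmaineq : m - ∫ ω, X ω ∂(ProbabilityTheory.cond μ E) = a⁻¹ • J := by
    rw [hcondint, hJeq]
    have hIE : (∫ ω in E, X ω ∂μ) = m - ∫ ω in Eᶜ, X ω ∂μ := by
      rw [← hsplit]; abel
    rw [hIE, smul_sub, smul_sub, smul_smul]
    have hinv : a⁻¹ * (1 - a) = a⁻¹ - 1 := by field_simp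
    rw [hinv, sub_smul, one_smul]
    abel
  -- bound ‖J‖
  have hJbound : ‖J‖ ≤ σk * ε ^ (1 - (k : ℝ)⁻¹) := by
    rcases eq_or_ne J 0 with hJ0 | hJ0
    · rw [hJ0, norm_zero]; positivity
    · set v : EuclideanSpace ℝ (Fin d) := ‖J‖⁻¹ • J with hvdef
      have hv1 : ‖v‖ = 1 := norm_smul_inv_norm hJ0
      have hJnorm : ‖J‖ = (inner ℝ v J : ℝ) := by
        rw [hvdef, real_inner_smul_left, real_inner_self_eq_norm_sq]
        have : ‖J‖ ≠ 0 := norm_ne_zero_iff.mpr hJ0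
        field_simp
      have hinner : (inner ℝ v J : ℝ) = ∫ ω in Eᶜ, (inner ℝ v (X ω - m) : ℝ) ∂μ := by
        rw [hJdef, integral_inner (hXmint.restrict)]
      rw [hJnorm, hinner]
      exact holder_aux μ (fun ω => (inner ℝ v (X ω - m) : ℝ)) k hk σk ε hσ hε0
        (hintk v)
        ((measurable_const.inner (hXm.sub measurable_const)).aestronglyMeasurable)
        (hmom v hv1) Eᶜ hEmeas.compl hcomplR
  constructor
  · rw [hmaineq, norm_smul, norm_inv, Real.norm_eq_abs, abs_of_pos ha0]
    rw [div_eq_inv_mul]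
    calc a⁻¹ * ‖J‖ ≤ a⁻¹ * (σk * ε ^ (1 - (k : ℝ)⁻¹)) := by
          exact mul_le_mul_of_nonneg_left hJbound (inv_nonneg.mpr ha0.le)
    _ ≤ (1 - ε)⁻¹ * (σk * ε ^ (1 - (k : ℝ)⁻¹)) := by
          refine mul_le_mul_of_nonneg_right ?_ (by positivity)
          exact inv_anti₀ hε1 haR
  · rw [div_le_iff₀ hε1]
    have h2 : (1:ℝ) ≤ 2 * (1 - ε) := by linarith
    nlinarith [mul_nonneg hσ hεpow]
end

section
/- Let x_1,…,x_n ∈ ℝ^d with mean reference point μ = 0, and let ε ≤ 1/3, ε ≤ δ. Suppose w ∈ Δ_{n,ε} satisfies ‖∑_i w_i x_i‖ ≤ δ and ‖∑_i w_i x_i x_i^T − I‖ ≤ δ²/ε. Then there exists a subset S_1 ⊆ [n] with |S_1| ≥ (1 − 2ε)n such that ‖(1/|S_1|)∑_{i∈S_1} x_i‖ ≤ 10δ + 10√ε and (1/|S_1|)∑_{i∈S_1}(v^T x_i)² ≤ 9(1 + δ²/ε) for all unit vectors v. -/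
open Finset

set_option maxHeartbeats 2000000 in
theorem stmt13 {d n : ℕ} (x : Fin n → EuclideanSpace ℝ (Fin d)) (ε δ : ℝ)
    (hε0 : 0 < ε) (hε : ε ≤ 1/3) (hεδ : ε ≤ δ)
    (hint : ∃ m : ℕ, (m : ℝ) = ε * n)
    (w : Fin n → ℝ) (hw0 : ∀ i, 0 ≤ w i) (hw1 : ∀ i, w i ≤ 1 / ((1 - ε) * n))
    (hws : ∑ i, w i = 1)
    (hmean : ‖∑ i, w i • x i‖ ≤ δ)
    (hcov : ∀ v : EuclideanSpace ℝ (Fin d), ‖v‖ = 1 →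
      |(∑ i, w i * (inner ℝ v (x i) : ℝ) ^ 2) - 1| ≤ δ ^ 2 / ε) :
    ∃ S₁ : Finset (Fin n), (1 - 2 * ε) * (n : ℝ) ≤ (S₁.card : ℝ) ∧
      ‖(S₁.card : ℝ)⁻¹ • ∑ i ∈ S₁, x i‖ ≤ 10 * δ + 10 * Real.sqrt ε ∧
      ∀ v : EuclideanSpace ℝ (Fin d), ‖v‖ = 1 →
        (S₁.card : ℝ)⁻¹ * ∑ i ∈ S₁, (inner ℝ v (x i) : ℝ) ^ 2 ≤ 9 * (1 + δ ^ 2 / ε) := by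
  classical
  have hδ0 : 0 < δ := lt_of_lt_of_le hε0 hεδ
  have hsε0 : (0:ℝ) ≤ Real.sqrt ε := Real.sqrt_nonneg ε
  have hdε : (0:ℝ) ≤ δ^2/ε := div_nonneg (sq_nonneg δ) hε0.le
  have hP : (0:ℝ) < 1 + δ^2/ε := by linarith
  rcases Nat.eq_zero_or_pos n with hn | hn
  · subst hn
    refine ⟨∅, by simp, ?_, ?_⟩
    · simp only [Finset.card_empty, Finset.sum_empty, smul_zero, norm_zero, Nat.cast_zero]
      linarith
    · intro v hv
      simp only [Finset.card_empty, Finset.sum_empty, Nat.cast_zero, mul_zero, inv_zero,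
        zero_mul]
      linarith
  -- main case
  set N : ℝ := (n : ℝ) with hNdef
  have hN : 0 < N := by rw [hNdef]; exact_mod_cast hn
  have h1ε : (0:ℝ) < 1 - ε := by linarith
  set S : Finset (Fin n) := Finset.univ.filter (fun i => 1/(2*N) ≤ w i) with hSdef
  have hcardn : S.card ≤ n := by simpa using Finset.card_le_univ S
  set σ : ℝ := (S.card : ℝ) with hσdef
  have hσN : σ ≤ N := by rw [hσdef, hNdef]; exact_mod_cast hcardn
  have hw_in : ∀ i ∈ S, 1/(2*N) ≤ w i := fun i hi => (Finset.mem_filter.mp hi).2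
  have hw_out : ∀ i ∈ Sᶜ, w i ≤ 1/(2*N) := by
    intro i hi
    rw [Finset.mem_compl, hSdef, Finset.mem_filter] at hi
    push_neg at hi
    exact (hi (Finset.mem_univ i)).le
  have hw_up : ∀ i, w i ≤ 3/(2*N) := by
    intro i
    calc w i ≤ 1/((1-ε)*N) := hw1 i
    _ ≤ 3/(2*N) := by
      rw [div_le_div_iff₀ (by positivity) (by positivity)]
      nlinarith
  have hcompl_card : ((Sᶜ.card : ℕ) : ℝ) = N - σ := by
    rw [Finset.card_compl, Fintype.card_fin, Nat.cast_sub hcardn, hNdef, hσdef]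
  have hsum_out_le : ∑ i ∈ Sᶜ, w i ≤ (N - σ) * (1/(2*N)) := by
    have h := Finset.sum_le_card_nsmul Sᶜ w (1/(2*N)) hw_out
    rwa [nsmul_eq_mul, hcompl_card] at h
  have hsum_in_le : ∑ i ∈ S, w i ≤ σ * (1/((1-ε)*N)) := by
    have h := Finset.sum_le_card_nsmul S w (1/((1-ε)*N)) (fun i _ => hw1 i)
    rwa [nsmul_eq_mul, ← hσdef] at h
  have hsplit : ∑ i ∈ S, w i + ∑ i ∈ Sᶜ, w i = 1 := by
    rw [Finset.sum_add_sum_compl]; exact hws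
  have hsum_in_nonneg : 0 ≤ ∑ i ∈ S, w i := Finset.sum_nonneg (fun i _ => hw0 i)
  have hsum_out_nonneg : 0 ≤ ∑ i ∈ Sᶜ, w i := Finset.sum_nonneg (fun i _ => hw0 i)
  -- size lower bound
  have hσ_lb : (1 - 2*ε) * N ≤ σ := by
    have e1 : σ * (1/((1-ε)*N)) * ((1-ε)*N) = σ := by field_simp
    have e2 : (N-σ) * (1/(2*N)) * (2*N) = N - σ := by field_simp
    have hA : (∑ i ∈ S, w i) * ((1-ε)*N) ≤ σ := by
      calc (∑ i ∈ S, w i) * ((1-ε)*N) ≤ σ * (1/((1-ε)*N)) * ((1-ε)*N) :=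
        mul_le_mul_of_nonneg_right hsum_in_le (by positivity)
      _ = σ := e1
    have hB : (∑ i ∈ Sᶜ, w i) * (2*N) ≤ N - σ := by
      calc (∑ i ∈ Sᶜ, w i) * (2*N) ≤ (N-σ) * (1/(2*N)) * (2*N) :=
        mul_le_mul_of_nonneg_right hsum_out_le (by positivity)
      _ = N - σ := e2
    have step1 : (1-ε)*N ≤ σ*(1+ε) := by
      nlinarith [hA, hB, hsplit, mul_nonneg h1ε.le hN.le]
    nlinarith [step1, mul_nonneg (mul_nonneg hε0.le hε0.le) hN.le, hε0, hN]
  have hσ3 : N/3 ≤ σ := by nlinarith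
  have hσ0 : 0 < σ := by linarith
  have hσinv_up : σ⁻¹ ≤ 3/N := by
    rw [← one_div]
    have h := one_div_le_one_div_of_le (by positivity : (0:ℝ) < N/3) hσ3
    rwa [one_div_div] at h
  have hσinv_lo : 1/N ≤ σ⁻¹ := by
    rw [← one_div]; exact one_div_le_one_div_of_le hσ0 hσN
  have hNinv_nonneg : (0:ℝ) ≤ 1/N := by positivity
  have hmass : ∑ i ∈ Sᶜ, w i ≤ ε := by
    calc ∑ i ∈ Sᶜ, w i ≤ (N - σ) * (1/(2*N)) := hsum_out_le
    _ ≤ ε := by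
      rw [mul_one_div, div_le_iff₀ (by positivity)]
      nlinarith
  refine ⟨S, hσ_lb, ?_, ?_⟩
  · -- mean bound
    rw [← hσdef]
    set y : EuclideanSpace ℝ (Fin d) := σ⁻¹ • ∑ i ∈ S, x i with hydef
    have hkey : ∀ v : EuclideanSpace ℝ (Fin d), ‖v‖ = 1 →
        |(inner ℝ v y : ℝ)| ≤ 10 * δ + 10 * Real.sqrt ε := by
      intro v hv
      have hQ : ∑ i, w i * (inner ℝ v (x i) : ℝ) ^ 2 ≤ 1 + δ^2/ε := by
        have h := abs_le.mp (hcov v hv)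
        linarith [h.2]
      have hQS : ∑ i ∈ S, w i * (inner ℝ v (x i) : ℝ) ^ 2 ≤ 1 + δ^2/ε := by
        refine le_trans ?_ hQ
        exact Finset.sum_le_sum_of_subset_of_nonneg (Finset.subset_univ S)
          (fun i _ _ => mul_nonneg (hw0 i) (sq_nonneg _))
      have hQSc : ∑ i ∈ Sᶜ, w i * (inner ℝ v (x i) : ℝ) ^ 2 ≤ 1 + δ^2/ε := by
        refine le_trans ?_ hQ
        exact Finset.sum_le_sum_of_subset_of_nonneg (Finset.subset_univ Sᶜ)
          (fun i _ _ => mul_nonneg (hw0 i) (sq_nonneg _))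
      have hT0 : |∑ i, w i * (inner ℝ v (x i) : ℝ)| ≤ δ := by
        have heq : (inner ℝ v (∑ i, w i • x i) : ℝ) = ∑ i, w i * (inner ℝ v (x i) : ℝ) := by
          rw [inner_sum]
          exact Finset.sum_congr rfl (fun i _ => real_inner_smul_right v (x i) (w i))
        calc |∑ i, w i * (inner ℝ v (x i) : ℝ)|
            = |(inner ℝ v (∑ i, w i • x i) : ℝ)| := by rw [heq]
        _ ≤ ‖v‖ * ‖∑ i, w i • x i‖ := abs_real_inner_le_norm v _
        _ ≤ 1 * δ := by rw [hv]; exact mul_le_mul_of_nonneg_left hmean (by norm_num)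
        _ = δ := one_mul δ
      set b : Fin n → ℝ := fun i => σ⁻¹ - w i with hbdef
      have hb_abs : ∀ i ∈ S, |b i| ≤ 5/(2*N) := by
        intro i hi
        have h1 := hw_in i hi
        have h2 := hw_up i
        have r1 : 5/(2*N) = 5/2*(1/N) := by ring
        have r2 : 1/(2*N) = 1/2*(1/N) := by ring
        have r3 : 3/(2*N) = 3/2*(1/N) := by ring
        have r4 : 3/N = 3*(1/N) := by ring
        rw [abs_le]
        constructor <;> simp only [hbdef] <;>
          linarith [hσinv_up, hσinv_lo, hNinv_nonneg]
      have hb_neg : ∀ i, -(b i) ≤ (3/2)*ε/N := by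
        intro i
        have h1 := hw1 i
        have haux : 1/((1-ε)*N) ≤ 1/N + (3/2)*ε/N := by
          rw [← add_div, div_le_div_iff₀ (by positivity) hN]
          nlinarith
        simp only [hbdef]
        linarith [hσinv_lo]
      have hsum_b : ∑ i ∈ S, b i ≤ ε := by
        have heq : ∑ i ∈ S, b i = 1 - ∑ i ∈ S, w i := by
          simp only [hbdef]
          rw [Finset.sum_sub_distrib, Finset.sum_const, nsmul_eq_mul, ← hσdef,
            mul_inv_cancel₀ (ne_of_gt hσ0)]
        rw [heq]
        linarith [hmass, hsplit]
      have hsum_abs_b : ∑ i ∈ S, |b i| ≤ 4*ε := by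
        have h3εN : (0:ℝ) ≤ 3*ε/N := div_nonneg (by linarith) hN.le
        have hpt : ∀ i ∈ S, |b i| ≤ b i + 3*ε/N := by
          intro i _
          rw [abs_le']
          refine ⟨by linarith, ?_⟩
          have := hb_neg i
          have r : 3*ε/N = 2*(3/2*ε/N) := by ring
          linarith
        calc ∑ i ∈ S, |b i| ≤ ∑ i ∈ S, (b i + 3*ε/N) := Finset.sum_le_sum hpt
        _ = (∑ i ∈ S, b i) + σ * (3*ε/N) := by
          rw [Finset.sum_add_distrib, Finset.sum_const, nsmul_eq_mul, ← hσdef]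
        _ ≤ ε + N * (3*ε/N) := by
          have : σ * (3*ε/N) ≤ N * (3*ε/N) := mul_le_mul_of_nonneg_right hσN h3εN
          linarith [hsum_b]
        _ = 4*ε := by field_simp; ring
      -- Cauchy-Schwarz for the inner part
      have hT1 : |∑ i ∈ S, b i * (inner ℝ v (x i) : ℝ)| ≤ Real.sqrt (20*ε*(1+δ^2/ε)) := by
        have hCS := Finset.sum_mul_sq_le_sq_mul_sq S
          (fun i => |b i| / Real.sqrt (w i)) (fun i => Real.sqrt (w i) * |(inner ℝ v (x i) : ℝ)|)
        have hfg : ∀ i ∈ S, (|b i| / Real.sqrt (w i)) * (Real.sqrt (w i) * |(inner ℝ v (x i) : ℝ)|)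
            = |b i| * |(inner ℝ v (x i) : ℝ)| := by
          intro i hi
          have hwpos : 0 < w i := lt_of_lt_of_le (by positivity) (hw_in i hi)
          have hs : Real.sqrt (w i) ≠ 0 := by positivity
          field_simp
        have hf2 : ∀ i ∈ S, (|b i| / Real.sqrt (w i))^2 = b i ^2 / w i := by
          intro i hi
          have hwpos : 0 < w i := lt_of_lt_of_le (by positivity) (hw_in i hi)
          rw [div_pow, sq_abs, Real.sq_sqrt hwpos.le]
        have hg2 : ∀ i ∈ S, (Real.sqrt (w i) * |(inner ℝ v (x i) : ℝ)|)^2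
            = w i * (inner ℝ v (x i) : ℝ) ^2 := by
          intro i hi
          have hwpos : 0 < w i := lt_of_lt_of_le (by positivity) (hw_in i hi)
          rw [mul_pow, sq_abs, Real.sq_sqrt hwpos.le]
        rw [Finset.sum_congr rfl hfg, Finset.sum_congr rfl hf2, Finset.sum_congr rfl hg2] at hCS
        have hf2sum : ∑ i ∈ S, b i ^2 / w i ≤ 20*ε := by
          have hpt : ∀ i ∈ S, b i ^2 / w i ≤ 5 * |b i| := by
            intro i hi
            have hwpos : 0 < w i := lt_of_lt_of_le (by positivity) (hw_in i hi)
            rw [div_le_iff₀ hwpos]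
            have h1 := hb_abs i hi
            have h2 := hw_in i hi
            have h3 : (0:ℝ) ≤ |b i| := abs_nonneg _
            calc b i ^2 = |b i| * |b i| := by rw [← sq_abs]; ring
            _ ≤ (5/(2*N)) * |b i| := mul_le_mul_of_nonneg_right h1 h3
            _ = (5*|b i|) * (1/(2*N)) := by ring
            _ ≤ (5*|b i|) * w i :=
              mul_le_mul_of_nonneg_left h2 (by positivity)
            _ = 5 * |b i| * w i := by ring
          calc ∑ i ∈ S, b i ^2 / w i ≤ ∑ i ∈ S, 5 * |b i| := Finset.sum_le_sum hpt
          _ = 5 * ∑ i ∈ S, |b i| := by rw [Finset.mul_sum]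
          _ ≤ 20*ε := by linarith [hsum_abs_b]
        have habs : |∑ i ∈ S, b i * (inner ℝ v (x i) : ℝ)|
            ≤ ∑ i ∈ S, |b i| * |(inner ℝ v (x i) : ℝ)| := by
          calc |∑ i ∈ S, b i * (inner ℝ v (x i) : ℝ)| ≤ ∑ i ∈ S, |b i * (inner ℝ v (x i) : ℝ)| :=
            Finset.abs_sum_le_sum_abs _ _
          _ = ∑ i ∈ S, |b i| * |(inner ℝ v (x i) : ℝ)| :=
            Finset.sum_congr rfl (fun i _ => abs_mul _ _)
        have hsq : (∑ i ∈ S, |b i| * |(inner ℝ v (x i) : ℝ)|)^2 ≤ 20*ε*(1+δ^2/ε) := by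
          calc (∑ i ∈ S, |b i| * |(inner ℝ v (x i) : ℝ)|)^2
              ≤ (∑ i ∈ S, b i ^2 / w i) * ∑ i ∈ S, w i * (inner ℝ v (x i) : ℝ) ^2 := hCS
          _ ≤ 20*ε*(1+δ^2/ε) := by
            apply mul_le_mul hf2sum hQS
              (Finset.sum_nonneg (fun i _ => mul_nonneg (hw0 i) (sq_nonneg _)))
              (by linarith)
        have hnn : 0 ≤ ∑ i ∈ S, |b i| * |(inner ℝ v (x i) : ℝ)| :=
          Finset.sum_nonneg (fun i _ => mul_nonneg (abs_nonneg _) (abs_nonneg _))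
        have hc1 : (0:ℝ) ≤ 20*ε*(1+δ^2/ε) := mul_nonneg (by linarith) hP.le
        exact le_trans habs ((Real.le_sqrt hnn hc1).mpr hsq)
      have hT2 : |∑ i ∈ Sᶜ, w i * (inner ℝ v (x i) : ℝ)| ≤ Real.sqrt (ε*(1+δ^2/ε)) := by
        have hCS := Finset.sum_mul_sq_le_sq_mul_sq Sᶜ
          (fun i => Real.sqrt (w i)) (fun i => Real.sqrt (w i) * |(inner ℝ v (x i) : ℝ)|)
        have hfg : ∀ i ∈ Sᶜ, Real.sqrt (w i) * (Real.sqrt (w i) * |(inner ℝ v (x i) : ℝ)|)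
            = w i * |(inner ℝ v (x i) : ℝ)| := by
          intro i _
          rw [← mul_assoc, Real.mul_self_sqrt (hw0 i)]
        have hf2 : ∀ i ∈ Sᶜ, (Real.sqrt (w i))^2 = w i := fun i _ => Real.sq_sqrt (hw0 i)
        have hg2 : ∀ i ∈ Sᶜ, (Real.sqrt (w i) * |(inner ℝ v (x i) : ℝ)|)^2
            = w i * (inner ℝ v (x i) : ℝ) ^2 := by
          intro i _
          rw [mul_pow, sq_abs, Real.sq_sqrt (hw0 i)]
        rw [Finset.sum_congr rfl hfg, Finset.sum_congr rfl hf2, Finset.sum_congr rfl hg2] at hCS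
        have habs : |∑ i ∈ Sᶜ, w i * (inner ℝ v (x i) : ℝ)|
            ≤ ∑ i ∈ Sᶜ, w i * |(inner ℝ v (x i) : ℝ)| := by
          calc |∑ i ∈ Sᶜ, w i * (inner ℝ v (x i) : ℝ)| ≤ ∑ i ∈ Sᶜ, |w i * (inner ℝ v (x i) : ℝ)| :=
            Finset.abs_sum_le_sum_abs _ _
          _ = ∑ i ∈ Sᶜ, w i * |(inner ℝ v (x i) : ℝ)| :=
            Finset.sum_congr rfl (fun i _ => by rw [abs_mul, abs_of_nonneg (hw0 i)])
        have hsq : (∑ i ∈ Sᶜ, w i * |(inner ℝ v (x i) : ℝ)|)^2 ≤ ε*(1+δ^2/ε) := by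
          calc (∑ i ∈ Sᶜ, w i * |(inner ℝ v (x i) : ℝ)|)^2
              ≤ (∑ i ∈ Sᶜ, w i) * ∑ i ∈ Sᶜ, w i * (inner ℝ v (x i) : ℝ) ^2 := hCS
          _ ≤ ε*(1+δ^2/ε) := by
            apply mul_le_mul hmass hQSc
              (Finset.sum_nonneg (fun i _ => mul_nonneg (hw0 i) (sq_nonneg _)))
              hε0.le
        have hnn : 0 ≤ ∑ i ∈ Sᶜ, w i * |(inner ℝ v (x i) : ℝ)| :=
          Finset.sum_nonneg (fun i _ => mul_nonneg (hw0 i) (abs_nonneg _))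
        have hc1 : (0:ℝ) ≤ ε*(1+δ^2/ε) := mul_nonneg hε0.le hP.le
        exact le_trans habs ((Real.le_sqrt hnn hc1).mpr hsq)
      have hy : (inner ℝ v y : ℝ) = σ⁻¹ * ∑ i ∈ S, (inner ℝ v (x i) : ℝ) := by
        rw [hydef, real_inner_smul_right, inner_sum]
      have hdecomp : σ⁻¹ * ∑ i ∈ S, (inner ℝ v (x i) : ℝ)
          = (∑ i, w i * (inner ℝ v (x i) : ℝ)) + (∑ i ∈ S, b i * (inner ℝ v (x i) : ℝ))
            - (∑ i ∈ Sᶜ, w i * (inner ℝ v (x i) : ℝ)) := by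
        have hsplit2 : ∑ i, w i * (inner ℝ v (x i) : ℝ)
            = ∑ i ∈ S, w i * (inner ℝ v (x i) : ℝ) + ∑ i ∈ Sᶜ, w i * (inner ℝ v (x i) : ℝ) :=
          (Finset.sum_add_sum_compl S _).symm
        rw [hsplit2, Finset.mul_sum]
        simp only [hbdef, sub_mul, Finset.sum_sub_distrib]
        ring
      have hcomb : |(inner ℝ v y : ℝ)|
          ≤ δ + Real.sqrt (20*ε*(1+δ^2/ε)) + Real.sqrt (ε*(1+δ^2/ε)) := by
        rw [hy, hdecomp]
        calc |(∑ i, w i * (inner ℝ v (x i) : ℝ)) + (∑ i ∈ S, b i * (inner ℝ v (x i) : ℝ))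
              - (∑ i ∈ Sᶜ, w i * (inner ℝ v (x i) : ℝ))|
            ≤ |(∑ i, w i * (inner ℝ v (x i) : ℝ)) + (∑ i ∈ S, b i * (inner ℝ v (x i) : ℝ))|
              + |∑ i ∈ Sᶜ, w i * (inner ℝ v (x i) : ℝ)| := abs_sub _ _
        _ ≤ (|∑ i, w i * (inner ℝ v (x i) : ℝ)| + |∑ i ∈ S, b i * (inner ℝ v (x i) : ℝ)|)
              + |∑ i ∈ Sᶜ, w i * (inner ℝ v (x i) : ℝ)| :=
            add_le_add_left (abs_add_le _ _) _
        _ ≤ δ + Real.sqrt (20*ε*(1+δ^2/ε)) + Real.sqrt (ε*(1+δ^2/ε)) :=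
            add_le_add (add_le_add hT0 hT1) hT2
      -- numeric simplification
      have e1 : ε * (1+δ^2/ε) = ε + δ^2 := by field_simp
      have h20 : Real.sqrt (20*ε*(1+δ^2/ε)) = Real.sqrt 20 * Real.sqrt (ε+δ^2) := by
        rw [show (20:ℝ)*ε*(1+δ^2/ε) = 20*(ε+δ^2) by rw [mul_assoc, e1],
          Real.sqrt_mul (by norm_num)]
      have hsq20 : Real.sqrt 20 ≤ 4.5 := by
        rw [show (4.5:ℝ) = Real.sqrt (4.5^2) from (Real.sqrt_sq (by norm_num)).symm]
        exact Real.sqrt_le_sqrt (by norm_num)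
      have hsqed : Real.sqrt (ε+δ^2) ≤ Real.sqrt ε + δ := by
        rw [show Real.sqrt ε + δ = Real.sqrt ((Real.sqrt ε + δ)^2) from
          (Real.sqrt_sq (by positivity)).symm]
        apply Real.sqrt_le_sqrt
        nlinarith [Real.sq_sqrt hε0.le, hsε0, hδ0]
      have hsnn : 0 ≤ Real.sqrt (ε+δ^2) := Real.sqrt_nonneg _
      have hbig : Real.sqrt 20 * Real.sqrt (ε+δ^2) ≤ 4.5 * (Real.sqrt ε + δ) :=
        mul_le_mul hsq20 hsqed hsnn (by norm_num)
      calc |(inner ℝ v y : ℝ)|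
          ≤ δ + Real.sqrt (20*ε*(1+δ^2/ε)) + Real.sqrt (ε*(1+δ^2/ε)) := hcomb
      _ = δ + Real.sqrt 20 * Real.sqrt (ε+δ^2) + Real.sqrt (ε+δ^2) := by rw [h20, e1]
      _ ≤ δ + 4.5 * (Real.sqrt ε + δ) + (Real.sqrt ε + δ) :=
          add_le_add (add_le_add le_rfl hbig) hsqed
      _ ≤ 10 * δ + 10 * Real.sqrt ε := by linarith
    by_cases hy0 : y = 0
    · rw [hy0, norm_zero]; linarith
    · have hyn : ‖y‖ ≠ 0 := norm_ne_zero_iff.mpr hy0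
      set v : EuclideanSpace ℝ (Fin d) := ‖y‖⁻¹ • y with hvdef
      have hv1 : ‖v‖ = 1 := by
        rw [hvdef, norm_smul, norm_inv, norm_norm, inv_mul_cancel₀ hyn]
      have hinner : (inner ℝ v y : ℝ) = ‖y‖ := by
        rw [hvdef, real_inner_smul_left, real_inner_self_eq_norm_sq, sq,
          ← mul_assoc, inv_mul_cancel₀ hyn, one_mul]
      have := hkey v hv1
      rw [hinner, abs_of_nonneg (norm_nonneg y)] at this
      exact this
  · -- covariance bound
    intro v hv
    rw [← hσdef]
    have hQ : ∑ i, w i * (inner ℝ v (x i):ℝ) ^ 2 ≤ 1 + δ^2/ε := by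
      have h := abs_le.mp (hcov v hv)
      linarith [h.2]
    have hQS : ∑ i ∈ S, w i * (inner ℝ v (x i):ℝ) ^ 2 ≤ 1 + δ^2/ε := by
      refine le_trans ?_ hQ
      exact Finset.sum_le_sum_of_subset_of_nonneg (Finset.subset_univ S)
        (fun i _ _ => mul_nonneg (hw0 i) (sq_nonneg _))
    have hpt : ∀ i ∈ S, (inner ℝ v (x i):ℝ)^2 ≤ 2*N*(w i * (inner ℝ v (x i):ℝ)^2) := by
      intro i hi
      have h1 := hw_in i hi
      have h2 : (0:ℝ) ≤ (inner ℝ v (x i):ℝ)^2 := sq_nonneg _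
      have h3 : (1:ℝ) ≤ 2*N*w i := by
        rw [div_le_iff₀ (by positivity)] at h1
        nlinarith
      nlinarith [mul_le_mul_of_nonneg_right h3 h2]
    have hsum : ∑ i ∈ S, (inner ℝ v (x i):ℝ)^2 ≤ 2*N*(1+δ^2/ε) := by
      calc ∑ i ∈ S, (inner ℝ v (x i):ℝ)^2 ≤ ∑ i ∈ S, 2*N*(w i * (inner ℝ v (x i):ℝ)^2) :=
        Finset.sum_le_sum hpt
      _ = 2*N*∑ i ∈ S, w i * (inner ℝ v (x i):ℝ)^2 := by rw [Finset.mul_sum]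
      _ ≤ 2*N*(1+δ^2/ε) := by
        apply mul_le_mul_of_nonneg_left hQS (by nlinarith [hN])
    have hsum_nonneg : 0 ≤ ∑ i ∈ S, (inner ℝ v (x i):ℝ)^2 :=
      Finset.sum_nonneg (fun i _ => sq_nonneg _)
    have h2NP : (0:ℝ) ≤ 2*N*(1+δ^2/ε) := by nlinarith [hP, hN]
    calc σ⁻¹ * ∑ i ∈ S, (inner ℝ v (x i):ℝ)^2 ≤ σ⁻¹ * (2*N*(1+δ^2/ε)) :=
        mul_le_mul_of_nonneg_left hsum (inv_nonneg.mpr hσ0.le)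
    _ ≤ (3/N) * (2*N*(1+δ^2/ε)) :=
        mul_le_mul_of_nonneg_right hσinv_up h2NP
    _ = 6*(1+δ^2/ε) := by field_simp; ring
    _ ≤ 9*(1+δ^2/ε) := by nlinarith
    _ ≤ 9*(1+δ^2/ε) := by nlinarith
end

section
/- Let 0 ≤ ε ≤ δ with ε ≤ 1/2, and let S ⊂ ℝ^d satisfy: ‖μ_S − μ‖ ≤ δ, v^T Σ̄_S v ≤ 1 + δ²/ε for all unit vectors v, and v^T Σ̄_{S'} v ≥ 1 − δ²/ε for all S' ⊆ S with |S'| ≥ (1−ε)|S| and all unit vectors v. Then for every subset S' ⊆ S with |S'| ≥ (1−ε)|S|: (1/|S|)∑_{i ∈ S∖S'} (v^T(x_i − μ))² ≤ 2δ²/ε + ε for all unit vectors v. -/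
open Finset

theorem stmt18 {d n : ℕ} (x : Fin n → EuclideanSpace ℝ (Fin d)) (S : Finset (Fin n))
    (μ : EuclideanSpace ℝ (Fin d)) (ε δ : ℝ)
    (hε0 : 0 ≤ ε) (hεδ : ε ≤ δ) (hε : ε ≤ 1/2)
    (hmean : ‖sampleMean x S - μ‖ ≤ δ)
    (hub : ∀ v : EuclideanSpace ℝ (Fin d), ‖v‖ = 1 → qForm x S μ v ≤ 1 + δ ^ 2 / ε)
    (hlb : ∀ S' ⊆ S, (1 - ε) * (S.card : ℝ) ≤ (S'.card : ℝ) →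
      ∀ v : EuclideanSpace ℝ (Fin d), ‖v‖ = 1 → 1 - δ ^ 2 / ε ≤ qForm x S' μ v) :
    ∀ S' ⊆ S, (1 - ε) * (S.card : ℝ) ≤ (S'.card : ℝ) →
      ∀ v : EuclideanSpace ℝ (Fin d), ‖v‖ = 1 →
        (S.card : ℝ)⁻¹ * ∑ i ∈ S \ S', (inner ℝ v (x i - μ) : ℝ) ^ 2 ≤ 2 * δ ^ 2 / ε + ε := by
  intro S' hS' hcard v hv
  have hq : 0 ≤ δ ^ 2 / ε := div_nonneg (sq_nonneg δ) hε0
  rcases eq_or_lt_of_le (Nat.cast_nonneg S.card : (0:ℝ) ≤ S.card) with hN | hN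
  · -- S.card = 0
    rw [← hN]
    simp
    positivity
  · set N : ℝ := (S.card : ℝ)
    set M : ℝ := (S'.card : ℝ)
    have hM : 0 < M := lt_of_lt_of_le (by nlinarith : (0:ℝ) < (1 - ε) * N) hcard
    have hMN : M ≤ N := by
      exact_mod_cast Nat.cast_le.mpr (Finset.card_le_card hS')
    have hsplit : ∑ i ∈ S \ S', (inner ℝ v (x i - μ) : ℝ) ^ 2
        + ∑ i ∈ S', (inner ℝ v (x i - μ) : ℝ) ^ 2
        = ∑ i ∈ S, (inner ℝ v (x i - μ) : ℝ) ^ 2 :=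
      Finset.sum_sdiff hS'
    have hA := hub v hv
    have hB := hlb S' hS' hcard v hv
    have hAdef : ∑ i ∈ S, (inner ℝ v (x i - μ) : ℝ) ^ 2 = N * qForm x S μ v := by
      rw [qForm]; field_simp; exact (mul_div_cancel_right₀ _ hN.ne').symm
    have hBdef : ∑ i ∈ S', (inner ℝ v (x i - μ) : ℝ) ^ 2 = M * qForm x S' μ v := by
      rw [qForm]; field_simp; exact (mul_div_cancel_right₀ _ hM.ne').symm
    have hLHS : N⁻¹ * ∑ i ∈ S \ S', (inner ℝ v (x i - μ) : ℝ) ^ 2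
        = qForm x S μ v - (M / N) * qForm x S' μ v := by
      have : ∑ i ∈ S \ S', (inner ℝ v (x i - μ) : ℝ) ^ 2
          = N * qForm x S μ v - M * qForm x S' μ v := by
        rw [← hAdef, ← hBdef]; linarith
      rw [this]; field_simp
    rw [hLHS]
    set A := qForm x S μ v
    set B := qForm x S' μ v
    set r := M / N with hr
    have hr1 : r ≤ 1 := by rw [hr]; exact div_le_one_of_le₀ hMN hN.le
    have hr2 : 1 - ε ≤ r := by
      rw [hr, le_div_iff₀ hN]; linarith
    have hr0 : 0 ≤ r := div_nonneg hM.le hN.le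
    have h1 : A - r * B ≤ (1 + δ ^ 2 / ε) - r * (1 - δ ^ 2 / ε) := by
      have := mul_le_mul_of_nonneg_left hB hr0
      linarith
    rw [show 2 * δ ^ 2 / ε = 2 * (δ ^ 2 / ε) by ring]
    nlinarith [mul_nonneg (sub_nonneg.mpr hr1) hq]
end
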